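/- Let n be a nonempty finite type, v : EuclideanSpace ℂ n a unit vector, and ρ = vvᴴ the rank-one orthogonal projection matrix ρ i j = v i · conj(v j). Suppose ρ = ∑_{k ∈ K} λ_k σ_k for a finite family with λ_k > 0, ∑_k λ_k = 1, and each σ_k : Matrix n n ℂ positive semidefinite with trace 1. Then σ_k = ρ for every k ∈ K. -/

import Mathlib

open scoped BigOperators ComplexOrder
open Matrix

/-- a rank-one projection (pure state) admits no nontrivial convex
decomposition into positive semidefinite trace-one matrices: every component of such
a decomposition equals the projection itself. -/
theorem pure_state_extremal
    {n : Type*} [Fintype n] [Nonempty n]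
    (v : EuclideanSpace ℂ n) (hv : ‖v‖ = 1)
    (ρ : Matrix n n ℂ) (hρ : ρ = Matrix.of fun i j => v i * starRingEnd ℂ (v j))
    (K : Type*) [Fintype K] (lam : K → ℝ) (σ : K → Matrix n n ℂ)
    (hlam : ∀ k, 0 < lam k) (hlamsum : ∑ k, lam k = 1)
    (hσpsd : ∀ k, (σ k).PosSemidef) (hσtr : ∀ k, (σ k).trace = 1)
    (hdecomp : ρ = ∑ k, (lam k : ℂ) • σ k) :
    ∀ k, σ k = ρ := by
  classical
  -- view v as a plain function
  set u : n → ℂ := fun i => v i with hu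
  -- normalization: star u ⬝ᵥ u = 1
  have hvv : star u ⬝ᵥ u = 1 := by
    have h1 : (inner ℂ v v : ℂ) = (‖v‖ : ℂ) ^ 2 := inner_self_eq_norm_sq_to_K v
    rw [hv] at h1
    simp only [PiLp.inner_apply, RCLike.inner_apply] at h1
    simpa [PiLp.inner_apply, dotProduct, hu, mul_comm] using h1
  -- ρ acts as the projection onto u
  have hρmul : ∀ x : n → ℂ, ρ *ᵥ x = (star u ⬝ᵥ x) • u := by
    intro x
    funext i
    simp only [hρ, Matrix.mulVec, dotProduct, Matrix.of_apply, Pi.smul_apply,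
      smul_eq_mul, Finset.sum_mul, Pi.star_apply, RCLike.star_def]
    exact Finset.sum_congr rfl fun j _ => by ring
  intro k
  set τ := σ k with hτ
  -- Step A: τ kills vectors orthogonal to u
  have stepA : ∀ x : n → ℂ, star u ⬝ᵥ x = 0 → τ *ᵥ x = 0 := by
    intro x hx
    have hρx : star x ⬝ᵥ ρ *ᵥ x = 0 := by
      rw [hρmul x, hx, zero_smul, dotProduct_zero]
    have hsum : ∑ j, (lam j : ℂ) * (star x ⬝ᵥ (σ j) *ᵥ x) = 0 := by
      calc ∑ j, (lam j : ℂ) * (star x ⬝ᵥ (σ j) *ᵥ x)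
          = star x ⬝ᵥ (∑ j, (lam j : ℂ) • σ j) *ᵥ x := by
            induction (Finset.univ : Finset K) using Finset.induction with
            | empty => simp
            | insert _ _ h ih =>
              simp [Finset.sum_insert h, Matrix.add_mulVec, dotProduct_add,
                Matrix.smul_mulVec, dotProduct_smul, smul_eq_mul, ih]
        _ = star x ⬝ᵥ ρ *ᵥ x := by rw [← hdecomp]
        _ = 0 := hρx
    have hnonneg : ∀ j ∈ Finset.univ, (0:ℂ) ≤ (lam j : ℂ) * (star x ⬝ᵥ (σ j) *ᵥ x) := by
      intro j _
      have h1 : (0:ℂ) ≤ (lam j : ℂ) := by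
        rw [Complex.zero_le_real]; exact (hlam j).le
      exact mul_nonneg h1 ((hσpsd j).dotProduct_mulVec_nonneg x)
    have hzero := (Finset.sum_eq_zero_iff_of_nonneg hnonneg).mp hsum k (Finset.mem_univ k)
    have hlamk : (lam k : ℂ) ≠ 0 := by
      exact_mod_cast (hlam k).ne'
    have hq : star x ⬝ᵥ τ *ᵥ x = 0 := by
      rcases mul_eq_zero.mp hzero with h | h
      · exact absurd h hlamk
      · exact h
    exact ((hσpsd k).dotProduct_mulVec_zero_iff x).mp hq
  -- Step B: τ *ᵥ u = c • u where c = star u ⬝ᵥ τ *ᵥ u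
  set c : ℂ := star u ⬝ᵥ τ *ᵥ u with hc
  have stepB : τ *ᵥ u = c • u := by
    set w : n → ℂ := τ *ᵥ u - c • u with hw
    have hwperp : star u ⬝ᵥ w = 0 := by
      simp [hw, dotProduct_sub, dotProduct_smul, hvv, ← hc, smul_eq_mul]
    have hτw : τ *ᵥ w = 0 := stepA w hwperp
    have hherm : star w ⬝ᵥ τ *ᵥ u = 0 := by
      rw [Matrix.dotProduct_mulVec]
      have : star w ᵥ* τ = 0 := by
        have h1 : star (τ *ᵥ w) = star w ᵥ* τᴴ := Matrix.star_mulVec τ w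
        rw [hτw, (hσpsd k).1] at h1
        simpa using h1.symm
      rw [this, zero_dotProduct]
    have hwv : star w ⬝ᵥ u = 0 := by
      have h1 : star (star w ⬝ᵥ u) = 0 := by
        rw [← Matrix.star_dotProduct, hwperp]
      simpa using congrArg star h1
    have hww : star w ⬝ᵥ w = 0 := by
      have hdecw : τ *ᵥ u = c • u + w := by simp [hw]
      have := hherm
      rw [hdecw, dotProduct_add, dotProduct_smul, hwv, smul_zero,
        zero_add] at this
      exact this
    have : w = 0 := dotProduct_star_self_eq_zero.mp hww
    have := sub_eq_zero.mp (hw ▸ this)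
    exact this
  -- Step C: τ = c • ρ
  have stepC : τ = c • ρ := by
    have hmul : ∀ x : n → ℂ, τ *ᵥ x = c • (ρ *ᵥ x) := by
      intro x
      have hx : x = (star u ⬝ᵥ x) • u + (x - (star u ⬝ᵥ x) • u) := by ring_nf
      have hperp : star u ⬝ᵥ (x - (star u ⬝ᵥ x) • u) = 0 := by
        simp [dotProduct_sub, dotProduct_smul, hvv, smul_eq_mul]
      calc τ *ᵥ x = τ *ᵥ ((star u ⬝ᵥ x) • u + (x - (star u ⬝ᵥ x) • u)) := by rw [← hx]
        _ = (star u ⬝ᵥ x) • (τ *ᵥ u) + τ *ᵥ (x - (star u ⬝ᵥ x) • u) := by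
            rw [Matrix.mulVec_add, Matrix.mulVec_smul]
        _ = (star u ⬝ᵥ x) • (c • u) := by rw [stepA _ hperp, add_zero, stepB]
        _ = c • (ρ *ᵥ x) := by rw [hρmul x, smul_comm]
    ext i j
    have := congrFun (hmul (Pi.single j 1)) i
    simpa [Matrix.mulVec_single, Matrix.smul_mulVec] using this
  -- trace forces c = 1
  have htrρ : ρ.trace = 1 := by
    have : ρ.trace = star u ⬝ᵥ u := by
      simp [hρ, Matrix.trace, Matrix.diag, dotProduct, mul_comm, hu]
    rw [this, hvv]
  have hcτ : τ.trace = c := by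
    rw [stepC, Matrix.trace_smul, htrρ, smul_eq_mul, mul_one]
  have hc1 : c = 1 := by rw [← hcτ]; exact hσtr k
  rw [hτ] at stepC ⊢
  rw [stepC, hc1, one_smul]
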